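/- If A ∈ ℝ^{n×n} satisfies α(⌈A⌉_Mzr) < 0 (A is M-Hurwitz), then A is Lyapunov diagonally stable: there exists η ∈ ℝ^n_{>0} such that [η]A + A^T[η] is negative definite. -/

import Mathlib

open Matrix

/-- Spectral abscissa: supremum of real parts of (complex) eigenvalues. -/
noncomputable def specAbs {n : ℕ} (A : Matrix (Fin n) (Fin n) ℝ) : ℝ :=
  sSup {r : ℝ | ∃ μ : ℂ, μ ∈ spectrum ℂ (A.map (algebraMap ℝ ℂ)) ∧ r = μ.re}

/-- Metzler majorant. -/
def mzr {n : ℕ} (A : Matrix (Fin n) (Fin n) ℝ) : Matrix (Fin n) (Fin n) ℝ :=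
  fun i j => if i = j then A i j else |A i j|

namespace MHurwitz

attribute [local instance] Matrix.linftyOpNormedAddCommGroup Matrix.linftyOpNormedRing
  Matrix.linftyOpNormedAlgebra

abbrev Mat (n : ℕ) := Matrix (Fin n) (Fin n) ℝ

variable {n : ℕ}

lemma commute_ringInverse {R : Type*} [Ring R] {a b : R} (h : Commute a b) :
    Commute a (Ring.inverse b) := by
  by_cases hb : IsUnit b
  · lift b to Rˣ using hb
    rw [Ring.inverse_unit]
    exact h.units_inv_right
  · rw [Ring.inverse_non_unit _ hb]
    exact Commute.zero_right a

lemma pow_entry_nonneg (N : Mat n) (hN : ∀ i j, 0 ≤ N i j) (k : ℕ) (i j : Fin n) :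
    0 ≤ (N ^ k) i j := by
  induction k generalizing i j with
  | zero =>
    simp only [pow_zero, Matrix.one_apply]
    split <;> norm_num
  | succ k ih =>
    rw [pow_succ, Matrix.mul_apply]
    exact Finset.sum_nonneg fun l _ => mul_nonneg (ih i l) (hN l j)

noncomputable def entryCLM (i j : Fin n) : Mat n →L[ℝ] ℝ :=
  LinearMap.toContinuousLinearMap
    { toFun := fun A : Mat n => A i j
      map_add' := fun _ _ => rfl
      map_smul' := fun _ _ => rfl }

@[simp] lemma entryCLM_apply (i j : Fin n) (A : Mat n) : entryCLM i j A = A i j := rfl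

lemma kci (t₀ h : ℝ) (k m : ℕ) :
    ∑ μ ∈ Finset.range (k + 1),
      ((m + μ).choose m : ℝ) * h ^ μ * ((k.choose (m + μ) : ℝ) * t₀ ^ (k - (m + μ))) =
      (k.choose m : ℝ) * (t₀ + h) ^ (k - m) := by
  rcases lt_or_ge k m with hkm | hmk
  · rw [Nat.choose_eq_zero_of_lt hkm]
    rw [Finset.sum_eq_zero, Nat.cast_zero, zero_mul]
    intro μ _
    rw [Nat.choose_eq_zero_of_lt (lt_of_lt_of_le hkm (Nat.le_add_right m μ))]
    simp
  · -- rewrite coefficients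
    have key : ∀ μ, ((m + μ).choose m : ℝ) * (k.choose (m + μ) : ℝ) =
        (k.choose m : ℝ) * ((k - m).choose μ : ℝ) := by
      intro μ
      rcases le_or_gt (m + μ) k with hle | hlt
      · have := Nat.choose_mul (n := k) (Nat.le_add_right m μ)
        have h2 : (m + μ) - m = μ := by omega
        rw [h2] at this
        rw [mul_comm]
        exact_mod_cast congrArg (Nat.cast : ℕ → ℝ) this
      · rw [Nat.choose_eq_zero_of_lt hlt, Nat.choose_eq_zero_of_lt (show k - m < μ by omega)]
        simp
    calc ∑ μ ∈ Finset.range (k + 1),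
          ((m + μ).choose m : ℝ) * h ^ μ * ((k.choose (m + μ) : ℝ) * t₀ ^ (k - (m + μ)))
        = ∑ μ ∈ Finset.range (k + 1),
          (k.choose m : ℝ) * (((k - m).choose μ : ℝ) * h ^ μ * t₀ ^ (k - m - μ)) := by
          refine Finset.sum_congr rfl fun μ _ => ?_
          have h3 : k - (m + μ) = k - m - μ := by omega
          rw [h3]
          calc ((m + μ).choose m : ℝ) * h ^ μ * ((k.choose (m + μ) : ℝ) * t₀ ^ (k - m - μ))
              = (((m + μ).choose m : ℝ) * (k.choose (m + μ) : ℝ)) * (h ^ μ * t₀ ^ (k - m - μ)) := by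
                ring
            _ = ((k.choose m : ℝ) * ((k - m).choose μ : ℝ)) * (h ^ μ * t₀ ^ (k - m - μ)) := by
                rw [key μ]
            _ = (k.choose m : ℝ) * (((k - m).choose μ : ℝ) * h ^ μ * t₀ ^ (k - m - μ)) := by
                ring
      _ = (k.choose m : ℝ) * ∑ μ ∈ Finset.range (k + 1),
            (((k - m).choose μ : ℝ) * h ^ μ * t₀ ^ (k - m - μ)) := by
          rw [Finset.mul_sum]
      _ = (k.choose m : ℝ) * (t₀ + h) ^ (k - m) := by
          congr 1
          rw [← Finset.sum_subset (Finset.range_subset_range.2 (by omega : k - m + 1 ≤ k + 1))]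
          · rw [add_comm t₀ h, add_pow]
            refine Finset.sum_congr rfl fun μ hμ => ?_
            ring
          · intro μ _ hμ
            rw [Nat.choose_eq_zero_of_lt (by simp at hμ ⊢; omega)]
            simp

set_option maxHeartbeats 1000000 in
lemma step_lemma (N : Mat n) (hpn : ∀ (k : ℕ) i j, 0 ≤ (N ^ k) i j) (t₀ h : ℝ)
    (ht₀ : 0 ≤ t₀) (hh : 0 ≤ h)
    (hu₀ : IsUnit (1 - t₀ • N))
    (hC : h * ‖N * Ring.inverse (1 - t₀ • N)‖ < 1)
    (good₀ : ∀ (m : ℕ) i j, HasSum (fun k : ℕ => (k.choose m : ℝ) * (N ^ k) i j * t₀ ^ (k - m))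
      ((N ^ m * Ring.inverse (1 - t₀ • N) ^ (m + 1)) i j)) :
    IsUnit (1 - (t₀ + h) • N) ∧
    ∀ (m : ℕ) i j, HasSum (fun k : ℕ => (k.choose m : ℝ) * (N ^ k) i j * (t₀ + h) ^ (k - m))
      ((N ^ m * Ring.inverse (1 - (t₀ + h) • N) ^ (m + 1)) i j) := by
  set R₀ : Mat n := Ring.inverse (1 - t₀ • N) with hR₀def
  set x : Mat n := h • (N * R₀) with hxdef
  have hx : ‖x‖ < 1 := by
    rw [hxdef, norm_smul, Real.norm_of_nonneg hh]
    exact hC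
  -- commutation facts
  have c1 : Commute N (1 - t₀ • N) :=
    (Commute.one_right N).sub_right ((Commute.refl N).smul_right t₀)
  have cNR : Commute N R₀ := commute_ringInverse c1
  have cRx : Commute R₀ x := ((cNR.symm.mul_right (Commute.refl R₀))).smul_right h
  have cR1x : Commute R₀ (1 - x) := (Commute.one_right R₀).sub_right cRx
  -- inverse identities at t₀
  have hmulinv : (1 - t₀ • N) * R₀ = 1 := Ring.mul_inverse_cancel _ hu₀
  -- factorization
  have hfact : 1 - (t₀ + h) • N = (1 - t₀ • N) * (1 - x) := by
    have e1 : (1 - t₀ • N) * (N * R₀) = N := by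
      calc (1 - t₀ • N) * (N * R₀) = ((1 - t₀ • N) * N) * R₀ := by rw [mul_assoc]
        _ = (N * (1 - t₀ • N)) * R₀ := by rw [c1.eq]
        _ = N * ((1 - t₀ • N) * R₀) := by rw [mul_assoc]
        _ = N := by rw [hmulinv, mul_one]
    calc 1 - (t₀ + h) • N = 1 - t₀ • N - h • N := by
          rw [add_smul]; abel
      _ = (1 - t₀ • N) * 1 - h • ((1 - t₀ • N) * (N * R₀)) := by rw [mul_one, e1]
      _ = (1 - t₀ • N) * 1 - (1 - t₀ • N) * (h • (N * R₀)) := by rw [mul_smul_comm]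
      _ = (1 - t₀ • N) * (1 - x) := by rw [← mul_sub, hxdef]
  have hux : IsUnit (1 - x) := isUnit_one_sub_of_norm_lt_one hx
  have hu₁ : IsUnit (1 - (t₀ + h) • N) := by rw [hfact]; exact hu₀.mul hux
  refine ⟨hu₁, ?_⟩
  set iv : Mat n := Ring.inverse (1 - x) with hivdef
  have cRiv : Commute R₀ iv := commute_ringInverse cR1x
  have hinv1 : Ring.inverse (1 - (t₀ + h) • N) = R₀ * iv := by
    have e2 : (1 - (t₀ + h) • N) * (R₀ * iv) = 1 := by
      rw [hfact]
      calc (1 - t₀ • N) * (1 - x) * (R₀ * iv)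
          = (1 - t₀ • N) * ((1 - x) * R₀) * iv := by
            rw [mul_assoc, mul_assoc, mul_assoc]
        _ = (1 - t₀ • N) * (R₀ * (1 - x)) * iv := by rw [cR1x.symm.eq]
        _ = ((1 - t₀ • N) * R₀) * ((1 - x) * iv) := by
            rw [mul_assoc, mul_assoc, mul_assoc]
        _ = 1 := by rw [hmulinv, Ring.mul_inverse_cancel _ hux, one_mul]
    calc Ring.inverse (1 - (t₀ + h) • N)
        = Ring.inverse (1 - (t₀ + h) • N) * ((1 - (t₀ + h) • N) * (R₀ * iv)) := by
          rw [e2, mul_one]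
      _ = (Ring.inverse (1 - (t₀ + h) • N) * (1 - (t₀ + h) • N)) * (R₀ * iv) := by
          rw [mul_assoc]
      _ = R₀ * iv := by rw [Ring.inverse_mul_cancel _ hu₁, one_mul]
  -- matrix-level binomial series
  have hmat : ∀ m : ℕ, HasSum
      (fun μ : ℕ => (((m + μ).choose m : ℝ) * h ^ μ) • (N ^ (m + μ) * R₀ ^ (m + μ + 1)))
      (N ^ m * Ring.inverse (1 - (t₀ + h) • N) ^ (m + 1)) := by
    intro m
    have hbase := hasSum_choose_mul_geometric_of_norm_lt_one' m hx
    have h2 := hbase.mul_left (N ^ m * R₀ ^ (m + 1))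
    have hterm : ∀ μ : ℕ,
        (N ^ m * R₀ ^ (m + 1)) * ((((μ + m).choose m : ℕ) : Mat n) * x ^ μ) =
        (((m + μ).choose m : ℝ) * h ^ μ) • (N ^ (m + μ) * R₀ ^ (m + μ + 1)) := by
      intro μ
      have hxpow : x ^ μ = h ^ μ • (N ^ μ * R₀ ^ μ) := by
        rw [hxdef, smul_pow, cNR.mul_pow]
      have hmm : (N ^ m * R₀ ^ (m + 1)) * (N ^ μ * R₀ ^ μ) = N ^ (m + μ) * R₀ ^ (m + μ + 1) := by
        have swap : R₀ ^ (m + 1) * N ^ μ = N ^ μ * R₀ ^ (m + 1) := (cNR.symm.pow_pow _ _).eq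
        have hexp : m + 1 + μ = m + μ + 1 := by omega
        calc (N ^ m * R₀ ^ (m + 1)) * (N ^ μ * R₀ ^ μ)
            = N ^ m * (R₀ ^ (m + 1) * N ^ μ) * R₀ ^ μ := by
              simp only [mul_assoc]
          _ = N ^ m * (N ^ μ * R₀ ^ (m + 1)) * R₀ ^ μ := by rw [swap]
          _ = (N ^ m * N ^ μ) * (R₀ ^ (m + 1) * R₀ ^ μ) := by
              simp only [mul_assoc]
          _ = N ^ (m + μ) * R₀ ^ (m + μ + 1) := by
              rw [← pow_add, ← pow_add, hexp]
      have hcast : ∀ z : Mat n, (((μ + m).choose m : ℕ) : Mat n) * z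
          = (((μ + m).choose m : ℕ) : ℝ) • z := by
        intro z
        rw [← nsmul_eq_mul, ← Nat.cast_smul_eq_nsmul ℝ]
      rw [hxpow, hcast, mul_smul_comm, mul_smul_comm, hmm, smul_smul]
      congr 2
      · rw [Nat.add_comm μ m]
    have hval : N ^ m * Ring.inverse (1 - (t₀ + h) • N) ^ (m + 1)
        = (N ^ m * R₀ ^ (m + 1)) * iv ^ (m + 1) := by
      rw [hinv1, cRiv.mul_pow, mul_assoc]
    rw [hval]
    have hfun : (fun μ : ℕ => (((m + μ).choose m : ℝ) * h ^ μ) • (N ^ (m + μ) * R₀ ^ (m + μ + 1)))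
        = fun μ : ℕ => (N ^ m * R₀ ^ (m + 1)) * ((((μ + m).choose m : ℕ) : Mat n) * x ^ μ) :=
      funext fun μ => (hterm μ).symm
    rw [hfun]
    exact h2
  -- entrywise version
  intro m i j
  have hE : HasSum
      (fun μ : ℕ => (((m + μ).choose m : ℝ) * h ^ μ) * ((N ^ (m + μ) * R₀ ^ (m + μ + 1)) i j))
      ((N ^ m * Ring.inverse (1 - (t₀ + h) • N) ^ (m + 1)) i j) := by
    have := (entryCLM i j).hasSum (hmat m)
    simpa [smul_eq_mul] using this
  set f : ℕ × ℕ → ℝ := fun p =>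
    (((m + p.1).choose m : ℝ) * h ^ p.1) *
      ((p.2.choose (m + p.1) : ℝ) * (N ^ p.2) i j * t₀ ^ (p.2 - (m + p.1))) with hfdef
  have hα : ∀ μ : ℕ, HasSum (fun k => f (μ, k))
      ((((m + μ).choose m : ℝ) * h ^ μ) * ((N ^ (m + μ) * R₀ ^ (m + μ + 1)) i j)) :=
    fun μ => (good₀ (m + μ) i j).mul_left _
  have hfnn : ∀ p, 0 ≤ f p := by
    intro p
    refine mul_nonneg (mul_nonneg (Nat.cast_nonneg _) (pow_nonneg hh _))
      (mul_nonneg (mul_nonneg (Nat.cast_nonneg _) (hpn _ _ _)) (pow_nonneg ht₀ _))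
  have sumf : Summable f := by
    refine (summable_prod_of_nonneg hfnn).2 ⟨fun μ => (hα μ).summable, ?_⟩
    have : (fun μ : ℕ => ∑' k, f (μ, k)) = fun μ : ℕ =>
        (((m + μ).choose m : ℝ) * h ^ μ) * ((N ^ (m + μ) * R₀ ^ (m + μ + 1)) i j) :=
      funext fun μ => (hα μ).tsum_eq
    rw [this]
    exact hE.summable
  have hsig : HasSum (fun p : (Σ _ : ℕ, ℕ) => f (p.1, p.2))
      ((N ^ m * Ring.inverse (1 - (t₀ + h) • N) ^ (m + 1)) i j) :=
    HasSum.sigma_of_hasSum hE (fun μ => hα μ)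
      ((Equiv.sigmaEquivProd ℕ ℕ).summable_iff.2 sumf)
  have hF : HasSum f ((N ^ m * Ring.inverse (1 - (t₀ + h) • N) ^ (m + 1)) i j) :=
    (Equiv.sigmaEquivProd ℕ ℕ).hasSum_iff.1 hsig
  have hFswap : HasSum (fun p : ℕ × ℕ => f (p.2, p.1))
      ((N ^ m * Ring.inverse (1 - (t₀ + h) • N) ^ (m + 1)) i j) :=
    (Equiv.prodComm ℕ ℕ).hasSum_iff.2 hF
  have hk : ∀ k : ℕ, HasSum (fun μ => f (μ, k))
      ((k.choose m : ℝ) * (N ^ k) i j * (t₀ + h) ^ (k - m)) := by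
    intro k
    have hfin : ∀ μ ∉ Finset.range (k + 1), f (μ, k) = 0 := by
      intro μ hμ
      simp only [Finset.mem_range, not_lt] at hμ
      have hlt : k < m + μ := by omega
      simp [hfdef, Nat.choose_eq_zero_of_lt hlt]
    have hsum : HasSum (fun μ => f (μ, k)) (∑ μ ∈ Finset.range (k + 1), f (μ, k)) :=
      hasSum_sum_of_ne_finset_zero hfin
    have hval : ∑ μ ∈ Finset.range (k + 1), f (μ, k)
        = (k.choose m : ℝ) * (N ^ k) i j * (t₀ + h) ^ (k - m) := by
      have := kci t₀ h k m
      calc ∑ μ ∈ Finset.range (k + 1), f (μ, k)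
          = ∑ μ ∈ Finset.range (k + 1), (N ^ k) i j *
            (((m + μ).choose m : ℝ) * h ^ μ * ((k.choose (m + μ) : ℝ) * t₀ ^ (k - (m + μ)))) := by
            refine Finset.sum_congr rfl fun μ _ => ?_
            simp only [hfdef]
            ring
        _ = (N ^ k) i j * ((k.choose m : ℝ) * (t₀ + h) ^ (k - m)) := by
            rw [← Finset.mul_sum, this]
        _ = (k.choose m : ℝ) * (N ^ k) i j * (t₀ + h) ^ (k - m) := by ring
    rw [hval] at hsum
    exact hsum
  exact HasSum.prod_fiberwise hFswap hk

set_option maxHeartbeats 1000000 in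
theorem exists_pos_vec (M : Mat n) (hM : ∀ i j, i ≠ j → 0 ≤ M i j)
    (hdet : ∀ r : ℝ, 0 ≤ r → (r • (1 : Mat n) - M).det ≠ 0) :
    ∃ ξ : Fin n → ℝ, (∀ i, 0 < ξ i) ∧ ∀ i, (M *ᵥ ξ) i < 0 := by
  -- the shift
  set s : ℝ := 1 + ∑ i, |M i i| with hs
  have hs1 : (1 : ℝ) ≤ s := by
    rw [hs]
    have : (0:ℝ) ≤ ∑ i, |M i i| := Finset.sum_nonneg fun i _ => abs_nonneg _
    linarith
  have hs0 : (0 : ℝ) < s := lt_of_lt_of_le one_pos hs1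
  set N : Mat n := M + s • 1 with hNdef
  have hNnn : ∀ i j, 0 ≤ N i j := by
    intro i j
    rcases eq_or_ne i j with rfl | hij
    · have h1 : |M i i| ≤ ∑ l, |M l l| :=
        Finset.single_le_sum (fun l _ => abs_nonneg (M l l)) (Finset.mem_univ i)
      have h2 : -M i i ≤ |M i i| := neg_le_abs _
      simp only [hNdef, Matrix.add_apply, Matrix.smul_apply, Matrix.one_apply_eq, smul_eq_mul,
        mul_one]
      linarith
    · simp only [hNdef, Matrix.add_apply, Matrix.smul_apply, Matrix.one_apply_ne hij,
        smul_eq_mul, mul_zero, add_zero]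
      exact hM i j hij
  have hpn := pow_entry_nonneg N hNnn
  set T : ℝ := 1 / s with hT
  have hT0 : 0 < T := by positivity
  -- units along the segment
  have hunit : ∀ t : ℝ, 0 ≤ t → t ≤ T → IsUnit (1 - t • N) := by
    intro t ht0 htT
    rcases eq_or_lt_of_le ht0 with rfl | htpos
    · simp
    · have key : (1 : Mat n) - t • N = t • ((1 / t - s) • 1 - M) := by
        ext i j
        simp only [hNdef, Matrix.sub_apply, Matrix.add_apply, Matrix.smul_apply,
          Matrix.one_apply, smul_eq_mul]
        rcases eq_or_ne i j with rfl | hij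
        · simp only [if_pos rfl]
          field_simp
          ring
        · simp only [if_neg hij]
          ring
      rw [Matrix.isUnit_iff_isUnit_det, key, Matrix.det_smul, isUnit_iff_ne_zero]
      refine mul_ne_zero (pow_ne_zero _ (ne_of_gt htpos)) ?_
      refine hdet _ ?_
      have : s ≤ 1 / t := by
        rw [le_div_iff₀ htpos]
        calc s * t ≤ s * T := by
              exact mul_le_mul_of_nonneg_left htT (le_of_lt hs0)
          _ = 1 := by
              rw [hT, mul_one_div_cancel (ne_of_gt hs0)]
      linarith
  -- bound for the derivative matrices on the segment
  have hcont : ContinuousOn (fun t : ℝ => N * Ring.inverse (1 - t • N)) (Set.Icc 0 T) := by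
    refine ContinuousOn.mul continuousOn_const ?_
    intro t ht
    have hu := hunit t ht.1 ht.2
    have h1 : ContinuousAt Ring.inverse ((1 : Mat n) - t • N) := by
      have := NormedRing.inverse_continuousAt hu.unit
      rwa [IsUnit.unit_spec] at this
    have h2 : ContinuousAt (fun t : ℝ => (1 : Mat n) - t • N) t :=
      (continuous_const.sub (continuous_id.smul continuous_const)).continuousAt
    exact (ContinuousAt.comp (f := fun t : ℝ => (1 : Mat n) - t • N) h1 h2).continuousWithinAt
  obtain ⟨B, hB⟩ := isCompact_Icc.exists_bound_of_continuousOn hcont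
  set C : ℝ := max B 0 + 1 with hC
  have hC0 : 0 < C := by positivity
  have hCbd : ∀ t, 0 ≤ t → t ≤ T → ‖N * Ring.inverse (1 - t • N)‖ ≤ C := by
    intro t h1 h2
    have := hB t ⟨h1, h2⟩
    have h3 : B ≤ max B 0 := le_max_left _ _
    simp only [hC]
    linarith
  set h₀ : ℝ := 1 / (2 * C) with hh₀
  have hh₀0 : 0 < h₀ := by positivity
  -- base point
  have base : IsUnit (1 - (0:ℝ) • N) ∧
      ∀ (m : ℕ) i j, HasSum (fun k : ℕ => (k.choose m : ℝ) * (N ^ k) i j * (0:ℝ) ^ (k - m))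
        ((N ^ m * Ring.inverse (1 - (0:ℝ) • N) ^ (m + 1)) i j) := by
    constructor
    · simp
    intro m i j
    have h1 : (1 : Mat n) - (0:ℝ) • N = 1 := by simp
    have hval : (N ^ m * Ring.inverse (1 - (0:ℝ) • N) ^ (m + 1)) i j = (N ^ m) i j := by
      rw [h1, Ring.inverse_one, one_pow, mul_one]
    rw [hval]
    have hzero : ∀ k : ℕ, k ≠ m →
        (k.choose m : ℝ) * (N ^ k) i j * (0:ℝ) ^ (k - m) = 0 := by
      intro k hk
      rcases lt_or_gt_of_ne hk with hlt | hgt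
      · rw [Nat.choose_eq_zero_of_lt hlt]
        simp
      · rw [zero_pow (by omega : k - m ≠ 0)]
        simp
    have := hasSum_single (f := fun k : ℕ => (k.choose m : ℝ) * (N ^ k) i j * (0:ℝ) ^ (k - m)) m
      hzero
    simpa using this
  -- induction along the grid
  have grid : ∀ j : ℕ, IsUnit (1 - (min (j * h₀) T) • N) ∧
      ∀ (m : ℕ) i i', HasSum
        (fun k : ℕ => (k.choose m : ℝ) * (N ^ k) i i' * (min (j * h₀) T) ^ (k - m))
        ((N ^ m * Ring.inverse (1 - (min (j * h₀) T) • N) ^ (m + 1)) i i') := by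
    intro j
    induction j with
    | zero =>
      have : min ((0:ℕ) * h₀) T = 0 := by
        simp [min_eq_left (le_of_lt hT0)]
      rw [this]
      exact base
    | succ j ih =>
      set t₀ : ℝ := min (j * h₀) T with ht₀def
      set t₁ : ℝ := min ((j + 1 : ℕ) * h₀) T with ht₁def
      have ht₀0 : 0 ≤ t₀ := le_min (by positivity) (le_of_lt hT0)
      have ht₀T : t₀ ≤ T := min_le_right _ _
      have hstep0 : 0 ≤ t₁ - t₀ := by
        have : t₀ ≤ t₁ := by
          refine min_le_min ?_ le_rfl
          push_cast
          nlinarith [hh₀0]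
        linarith
      have hstep1 : t₁ - t₀ ≤ h₀ := by
        have h1 : t₁ ≤ t₀ + h₀ := by
          rcases le_or_gt ((j:ℝ) * h₀) T with hc | hc
          · have : t₀ = (j:ℝ) * h₀ := min_eq_left hc
            rw [this]
            calc t₁ ≤ ((j + 1 : ℕ) : ℝ) * h₀ := min_le_left _ _
              _ = (j:ℝ) * h₀ + h₀ := by push_cast; ring
          · have : t₀ = T := min_eq_right (le_of_lt hc)
            rw [this]
            calc t₁ ≤ T := min_le_right _ _
              _ ≤ T + h₀ := by linarith
        linarith
      have hCb : (t₁ - t₀) * ‖N * Ring.inverse (1 - t₀ • N)‖ < 1 := by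
        have h1 : ‖N * Ring.inverse (1 - t₀ • N)‖ ≤ C := hCbd t₀ ht₀0 ht₀T
        have h2 : (t₁ - t₀) * ‖N * Ring.inverse (1 - t₀ • N)‖ ≤ h₀ * C := by
          refine mul_le_mul hstep1 h1 (norm_nonneg _) (le_of_lt hh₀0)
        have h3 : h₀ * C = 1 / 2 := by
          rw [hh₀]
          field_simp
        calc (t₁ - t₀) * ‖N * Ring.inverse (1 - t₀ • N)‖ ≤ h₀ * C := h2
          _ = 1 / 2 := h3
          _ < 1 := by norm_num
      have := step_lemma N hpn t₀ (t₁ - t₀) ht₀0 hstep0 ih.1 hCb ih.2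
      rw [show t₀ + (t₁ - t₀) = t₁ by ring] at this
      exact this
  -- reach T
  obtain ⟨j, hj⟩ := exists_nat_ge (T / h₀)
  have hjT : T ≤ j * h₀ := by
    rw [div_le_iff₀ hh₀0] at hj
    exact hj
  have goodT := grid j
  rw [min_eq_right hjT] at goodT
  -- extract the positive vector
  set P : Mat n := Ring.inverse (1 - T • N) with hPdef
  have hsum0 : ∀ i i', HasSum (fun k : ℕ => (N ^ k) i i' * T ^ k) (P i i') := by
    intro i i'
    have := goodT.2 0 i i'
    simpa using this
  have hP0 : ∀ i i', 0 ≤ P i i' := by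
    intro i i'
    exact hasSum_le (fun k => mul_nonneg (hpn k i i') (pow_nonneg (le_of_lt hT0) k))
      hasSum_zero (hsum0 i i')
  have hPdiag : ∀ i, 1 ≤ P i i := by
    intro i
    have h1 := le_hasSum (hsum0 i i) 0
      (fun k _ => mul_nonneg (hpn k i i) (pow_nonneg (le_of_lt hT0) k))
    simpa using h1
  set ξ : Fin n → ℝ := fun i => ∑ i', P i i' with hξ
  have hξpos : ∀ i, 0 < ξ i := by
    intro i
    have h1 : P i i ≤ ξ i :=
      Finset.single_le_sum (fun i' _ => hP0 i i') (Finset.mem_univ i)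
    have := hPdiag i
    linarith
  refine ⟨ξ, hξpos, ?_⟩
  -- the algebra: N * P = s • (P - 1)
  have hPinv : (1 - T • N) * P = 1 := Ring.mul_inverse_cancel _ goodT.1
  have hNP : N * P = s • (P - 1) := by
    have h1 : P - T • (N * P) = 1 := by
      calc P - T • (N * P) = (1 - T • N) * P := by
            rw [sub_mul, one_mul, Matrix.smul_mul]
      _ = 1 := hPinv
    have h2 : T • (N * P) = P - 1 := by
      rw [← h1]; abel
    calc N * P = (s * T) • (N * P) := by
          rw [show s * T = 1 by rw [hT, mul_one_div_cancel (ne_of_gt hs0)], one_smul]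
      _ = s • (T • (N * P)) := by rw [← smul_smul]
      _ = s • (P - 1) := by rw [h2]
  intro i
  have hξv : ξ = P *ᵥ (fun _ => (1:ℝ)) := by
    funext i'
    simp [hξ, Matrix.mulVec, dotProduct]
  have hM' : M = N - s • (1 : Mat n) := by rw [hNdef]; abel
  have e1 : M *ᵥ ξ = N *ᵥ ξ - s • ξ := by
    rw [hM', Matrix.sub_mulVec, Matrix.smul_mulVec, Matrix.one_mulVec]
  have e2 : N *ᵥ ξ = s • ξ - s • (fun _ => (1:ℝ)) := by
    calc N *ᵥ ξ = N *ᵥ (P *ᵥ (fun _ => (1:ℝ))) := by rw [← hξv]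
      _ = (N * P) *ᵥ (fun _ => (1:ℝ)) := by rw [Matrix.mulVec_mulVec]
      _ = (s • (P - 1)) *ᵥ (fun _ => (1:ℝ)) := by rw [hNP]
      _ = s • ((P - 1) *ᵥ fun _ => (1:ℝ)) := Matrix.smul_mulVec _ _ _
      _ = s • (P *ᵥ (fun _ => (1:ℝ)) - (1 : Mat n) *ᵥ (fun _ => (1:ℝ))) := by
          rw [Matrix.sub_mulVec]
      _ = s • ξ - s • (fun _ => (1:ℝ)) := by rw [← hξv, Matrix.one_mulVec, smul_sub]
  have e3 : (M *ᵥ ξ) i = -s := by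
    rw [e1, e2]
    simp only [Pi.sub_apply, Pi.smul_apply, smul_eq_mul]
    ring
  rw [e3]
  linarith

lemma hdet_of_specAbs (M : Mat n) (h : specAbs M < 0) :
    ∀ r : ℝ, 0 ≤ r → (r • (1 : Mat n) - M).det ≠ 0 := by
  intro r hr hdet0
  set f := algebraMap ℝ ℂ with hf
  set B := M.map f with hB
  have hmap : ((r • (1 : Mat n) - M).map f) = (r : ℂ) • (1 : Matrix (Fin n) (Fin n) ℂ) - B := by
    ext i j
    simp only [Matrix.map_apply, Matrix.sub_apply, Matrix.smul_apply, Matrix.one_apply,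
      smul_eq_mul, _root_.map_sub, _root_.map_mul, apply_ite f, _root_.map_one, _root_.map_zero,
      hB, hf]
    split <;> simp
  have hdetC : ((r : ℂ) • (1 : Matrix (Fin n) (Fin n) ℂ) - B).det = 0 := by
    rw [← hmap]
    have := (RingHom.map_det f (r • (1 : Mat n) - M)).symm
    rw [show (r • (1 : Mat n) - M).map f = f.mapMatrix (r • (1 : Mat n) - M) from rfl, this,
      hdet0, map_zero]
  have hspec : (r : ℂ) ∈ spectrum ℂ B := by
    rw [spectrum.mem_iff, Algebra.algebraMap_eq_smul_one, Matrix.isUnit_iff_isUnit_det, hdetC]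
    simp
  have hmem : r ∈ {r' : ℝ | ∃ μ : ℂ, μ ∈ spectrum ℂ B ∧ r' = μ.re} :=
    ⟨(r : ℂ), hspec, by simp⟩
  have hbdd : BddAbove {r' : ℝ | ∃ μ : ℂ, μ ∈ spectrum ℂ B ∧ r' = μ.re} := by
    refine ⟨‖B‖ * ‖(1 : Matrix (Fin n) (Fin n) ℂ)‖, ?_⟩
    rintro y ⟨μ, hμ, rfl⟩
    calc μ.re ≤ |μ.re| := le_abs_self _
      _ ≤ ‖μ‖ := Complex.abs_re_le_norm μ
      _ = ‖μ‖ := rfl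
      _ ≤ ‖B‖ * ‖(1 : Matrix (Fin n) (Fin n) ℂ)‖ := spectrum.norm_le_norm_mul_of_mem hμ
  have hle : r ≤ specAbs M := le_csSup hbdd hmem
  have : specAbs M < 0 := h
  linarith

end MHurwitz

open MHurwitz in
/-- If `A` is M-Hurwitz, i.e. `α(⌈A⌉_Mzr) < 0`, then `A` is Lyapunov diagonally
stable: there is `η > 0` with `[η]A + Aᵀ[η]` negative definite. -/
theorem mHurwitz_imp_lds {n : ℕ} (A : Matrix (Fin n) (Fin n) ℝ)
    (h : specAbs (mzr A) < 0) :
    ∃ η : Fin n → ℝ, (∀ i, 0 < η i) ∧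
      (-(Matrix.diagonal η * A + Aᵀ * Matrix.diagonal η)).PosDef := by
  classical
  set M : Matrix (Fin n) (Fin n) ℝ := mzr A with hMdef
  -- the two positive vectors
  have hdetM : ∀ r : ℝ, 0 ≤ r → (r • (1 : Mat n) - M).det ≠ 0 := hdet_of_specAbs M h
  have hdetMT : ∀ r : ℝ, 0 ≤ r → (r • (1 : Mat n) - Mᵀ).det ≠ 0 := by
    intro r hr
    have : (r • (1 : Mat n) - Mᵀ) = (r • (1 : Mat n) - M)ᵀ := by
      rw [Matrix.transpose_sub, Matrix.transpose_smul, Matrix.transpose_one]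
    rw [this, Matrix.det_transpose]
    exact hdetM r hr
  obtain ⟨ξ, hξpos, hξ⟩ := exists_pos_vec M
    (fun i j hij => by simp [hMdef, mzr, if_neg hij, abs_nonneg]) hdetM
  obtain ⟨ζ, hζpos, hζ⟩ := exists_pos_vec Mᵀ
    (fun i j hij => by
      have : Mᵀ i j = |A j i| := by
        simp [hMdef, mzr, Matrix.transpose_apply, if_neg (Ne.symm hij)]
      rw [this]; exact abs_nonneg _) hdetMT
  -- weights
  set d : Fin n → ℝ := fun i => ζ i / ξ i with hd
  have hdpos : ∀ i, 0 < d i := fun i => div_pos (hζpos i) (hξpos i)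
  refine ⟨d, hdpos, ?_⟩
  set Bm : Matrix (Fin n) (Fin n) ℝ := Matrix.diagonal d * A + Aᵀ * Matrix.diagonal d with hBm
  -- Hermitian
  have hherm : (-Bm).IsHermitian := by
    have htr : Bmᵀ = Bm := by
      rw [hBm, Matrix.transpose_add, Matrix.transpose_mul, Matrix.transpose_mul,
        Matrix.diagonal_transpose, Matrix.transpose_transpose]
      exact add_comm _ _
    have : (-Bm)ᴴ = -Bm := by
      rw [Matrix.conjTranspose_neg]
      rw [show Bmᴴ = Bmᵀ from rfl]  -- may fail; star on ℝ trivial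
      rw [htr]
    exact this
  refine posDef_iff_dotProduct_mulVec.2 ⟨hherm, ?_⟩
  intro x hx
  -- the quadratic form
  obtain ⟨i₀, hi₀⟩ : ∃ i₀, x i₀ ≠ 0 := by
    by_contra hc
    push_neg at hc
    exact hx (funext hc)
  have key : x ⬝ᵥ (Bm *ᵥ x) < 0 := by
    set y : Fin n → ℝ := fun i => |x i| with hy
    set z : Fin n → ℝ := fun i => y i / ξ i with hz
    set S : Fin n → Fin n → ℝ := fun i j => d i * M i j + M j i * d j with hS
    set W : Fin n → ℝ := fun i => ∑ j, S i j * ξ j with hW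
    have hz0 : ∀ i, 0 ≤ z i := fun i => div_nonneg (abs_nonneg _) (le_of_lt (hξpos i))
    have hyz : ∀ i, y i = z i * ξ i := fun i =>
      (div_mul_cancel₀ _ (ne_of_gt (hξpos i))).symm
    have hSsymm : ∀ i j, S j i = S i j := by
      intro i j
      simp only [hS]
      ring
    have hSoff : ∀ i j, i ≠ j → 0 ≤ S i j := by
      intro i j hij
      have h1 : M i j = |A i j| := by simp [hMdef, mzr, hij]
      have h2 : M j i = |A j i| := by simp [hMdef, mzr, (Ne.symm hij)]
      simp only [hS, h1, h2]
      have := hdpos i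
      have := hdpos j
      positivity
    have hBij : ∀ i j, Bm i j = d i * A i j + A j i * d j := by
      intro i j
      simp [hBm, Matrix.add_apply, Matrix.diagonal_mul, Matrix.mul_diagonal,
        Matrix.transpose_apply]
    have hWneg : ∀ i, W i < 0 := by
      intro i
      have e : W i = d i * (M *ᵥ ξ) i + (Mᵀ *ᵥ ζ) i := by
        simp only [hW, hS, Matrix.mulVec, dotProduct, Matrix.transpose_apply,
          Finset.mul_sum]
        rw [← Finset.sum_add_distrib]
        refine Finset.sum_congr rfl fun j _ => ?_
        have : d j * ξ j = ζ j := by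
          simp only [hd]
          exact div_mul_cancel₀ _ (ne_of_gt (hξpos j))
        calc (d i * M i j + M j i * d j) * ξ j
            = d i * (M i j * ξ j) + M j i * (d j * ξ j) := by ring
          _ = d i * (M i j * ξ j) + M j i * ζ j := by rw [this]
      rw [e]
      have := mul_neg_of_pos_of_neg (hdpos i) (hξ i)
      have := hζ i
      linarith
    have hform : x ⬝ᵥ (Bm *ᵥ x) = ∑ i, ∑ j, x i * (Bm i j * x j) := by
      simp only [dotProduct, Matrix.mulVec, Finset.mul_sum]
    have h2 : ∀ i j, x i * (Bm i j * x j) ≤ S i j * (y i * y j) := by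
      intro i j
      rcases eq_or_ne i j with rfl | hij
      · have hMii : M i i = A i i := by simp [hMdef, mzr]
        have habs : y i * y i = x i * x i := abs_mul_abs_self (x i)
        refine le_of_eq ?_
        rw [hBij]
        simp only [hS, hMii, hy]
        rw [abs_mul_abs_self]
        ring
      · have hMij : M i j = |A i j| := by simp [hMdef, mzr, hij]
        have hMji : M j i = |A j i| := by simp [hMdef, mzr, (Ne.symm hij)]
        calc x i * (Bm i j * x j) ≤ |x i * (Bm i j * x j)| := le_abs_self _
          _ = |x i| * |Bm i j| * |x j| := by rw [abs_mul, abs_mul]; ring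
          _ ≤ |x i| * (d i * |A i j| + |A j i| * d j) * |x j| := by
              refine mul_le_mul_of_nonneg_right
                (mul_le_mul_of_nonneg_left ?_ (abs_nonneg _)) (abs_nonneg _)
              rw [hBij]
              calc |d i * A i j + A j i * d j| ≤ |d i * A i j| + |A j i * d j| := abs_add_le _ _
                _ = d i * |A i j| + |A j i| * d j := by
                    rw [abs_mul, abs_mul, abs_of_pos (hdpos i), abs_of_pos (hdpos j)]
          _ = S i j * (y i * y j) := by
              simp only [hS, hMij, hMji, hy]
              ring
    have h3 : ∀ i j, S i j * (y i * y j) = S i j * ξ i * ξ j * (z i * z j) := by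
      intro i j
      rw [hyz i, hyz j]
      ring
    have h4 : ∀ i j, S i j * ξ i * ξ j * (z i * z j) ≤
        S i j * ξ i * ξ j * ((z i ^ 2 + z j ^ 2) / 2) := by
      intro i j
      rcases eq_or_ne i j with rfl | hij
      · refine le_of_eq ?_
        ring
      · refine mul_le_mul_of_nonneg_left ?_ ?_
        · nlinarith [sq_nonneg (z i - z j)]
        · have h5 := hSoff i j hij
          have h6 := le_of_lt (hξpos i)
          have h7 := le_of_lt (hξpos j)
          positivity
    have hsplit : ∑ i, ∑ j, S i j * ξ i * ξ j * ((z i ^ 2 + z j ^ 2) / 2)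
        = ∑ i, (z i ^ 2 * ξ i) * W i := by
      have e1 : ∑ i, ∑ j, S i j * ξ i * ξ j * ((z i ^ 2 + z j ^ 2) / 2)
          = (∑ i, ∑ j, S i j * ξ i * ξ j * z i ^ 2 / 2)
            + ∑ i, ∑ j, S i j * ξ i * ξ j * z j ^ 2 / 2 := by
        rw [← Finset.sum_add_distrib]
        refine Finset.sum_congr rfl fun i _ => ?_
        rw [← Finset.sum_add_distrib]
        refine Finset.sum_congr rfl fun j _ => ?_
        ring
      have e2 : ∑ i, ∑ j, S i j * ξ i * ξ j * z j ^ 2 / 2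
          = ∑ i, ∑ j, S i j * ξ i * ξ j * z i ^ 2 / 2 := by
        rw [Finset.sum_comm]
        refine Finset.sum_congr rfl fun i _ => Finset.sum_congr rfl fun j _ => ?_
        rw [hSsymm j i]
        ring
      rw [e1, e2, ← Finset.sum_add_distrib]
      refine Finset.sum_congr rfl fun i _ => ?_
      rw [hW, Finset.mul_sum, ← Finset.sum_add_distrib]
      refine Finset.sum_congr rfl fun j _ => ?_
      ring
    have hzpos : 0 < z i₀ := div_pos (abs_pos.2 hi₀) (hξpos i₀)
    calc x ⬝ᵥ (Bm *ᵥ x) = ∑ i, ∑ j, x i * (Bm i j * x j) := hform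
      _ ≤ ∑ i, ∑ j, S i j * (y i * y j) :=
          Finset.sum_le_sum fun i _ => Finset.sum_le_sum fun j _ => h2 i j
      _ = ∑ i, ∑ j, S i j * ξ i * ξ j * (z i * z j) :=
          Finset.sum_congr rfl fun i _ => Finset.sum_congr rfl fun j _ => h3 i j
      _ ≤ ∑ i, ∑ j, S i j * ξ i * ξ j * ((z i ^ 2 + z j ^ 2) / 2) :=
          Finset.sum_le_sum fun i _ => Finset.sum_le_sum fun j _ => h4 i j
      _ = ∑ i, (z i ^ 2 * ξ i) * W i := hsplit
      _ < 0 := by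
          have hlt : ∑ i, (z i ^ 2 * ξ i) * W i < ∑ _i : Fin n, (0 : ℝ) := by
            refine Finset.sum_lt_sum (fun i _ => ?_) ⟨i₀, Finset.mem_univ i₀, ?_⟩
            · exact mul_nonpos_of_nonneg_of_nonpos
                (mul_nonneg (sq_nonneg _) (le_of_lt (hξpos i))) (le_of_lt (hWneg i))
            · exact mul_neg_of_pos_of_neg
                (mul_pos (pow_pos hzpos 2) (hξpos i₀)) (hWneg i₀)
          simpa using hlt
  have hfin : star x ⬝ᵥ ((-Bm) *ᵥ x) = -(x ⬝ᵥ (Bm *ᵥ x)) := by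
    have h1 : star x = x := star_trivial x
    rw [h1, Matrix.neg_mulVec, dotProduct_neg]
  rw [hfin]
  exact neg_pos.2 key
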